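/- Let U' ⊆ {x ∈ ℝ⁴ : x₃ > 0} be open and let u : U' → ℝ be a smooth solution of u₁₃ + u₂₄ + x₃(u₁₁u₂₂ − u₁₂²) = 0 on U'. Define Φ : U' → ℝ⁴ by Φ(x) = (x₁x₃, x₂/x₃², −1/(2x₃²), x₄). Suppose V ⊆ ℝ⁴ is open with Φ(U') ⊆ V and W : V → ℝ is a smooth function satisfying W(Φ(x)) = x₃·u(x) + x₁x₂²/(2x₃) for all x ∈ U'. Then at every point of Φ(U'), W satisfies the second heavenly equation W₁₃ + W₂₄ + W₁₁W₂₂ − W₁₂² = 0. -/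

import Mathlib

open scoped ContDiff

noncomputable section

/-- `pd i u x` is the partial derivative `∂u/∂xᵢ` at `x`. -/
def pd {n : ℕ} (i : Fin n) (u : (Fin n → ℝ) → ℝ) (x : Fin n → ℝ) : ℝ :=
  fderiv ℝ u x (Pi.single i 1)

/-- `pd2 i j u x` is the second partial derivative `∂²u/∂xᵢ∂xⱼ` at `x`. -/
def pd2 {n : ℕ} (i j : Fin n) (u : (Fin n → ℝ) → ℝ) (x : Fin n → ℝ) : ℝ :=
  pd i (pd j u) x

/-- Lie bracket of vector fields : `[X,Y](x) = DY(x)(X(x)) − DX(x)(Y(x))`. -/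
def lieBr {n : ℕ} (X Y : (Fin n → ℝ) → (Fin n → ℝ)) (x : Fin n → ℝ) : Fin n → ℝ :=
  fderiv ℝ Y x (X x) - fderiv ℝ X x (Y x)

lemma pd_congr {f g : (Fin 4 → ℝ) → ℝ} {x : Fin 4 → ℝ} (h : f =ᶠ[nhds x] g) (i : Fin 4) :
    pd i f x = pd i g x := by
  unfold pd; rw [h.fderiv_eq]

lemma pd_add {f g : (Fin 4 → ℝ) → ℝ} {x : Fin 4 → ℝ} (i : Fin 4)
    (hf : DifferentiableAt ℝ f x) (hg : DifferentiableAt ℝ g x) :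
    pd i (fun z => f z + g z) x = pd i f x + pd i g x := by
  unfold pd; rw [fderiv_fun_add hf hg]; simp

lemma pd_sub {f g : (Fin 4 → ℝ) → ℝ} {x : Fin 4 → ℝ} (i : Fin 4)
    (hf : DifferentiableAt ℝ f x) (hg : DifferentiableAt ℝ g x) :
    pd i (fun z => f z - g z) x = pd i f x - pd i g x := by
  unfold pd; rw [fderiv_fun_sub hf hg]; simp

lemma pd_mul {f g : (Fin 4 → ℝ) → ℝ} {x : Fin 4 → ℝ} (i : Fin 4)
    (hf : DifferentiableAt ℝ f x) (hg : DifferentiableAt ℝ g x) :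
    pd i (fun z => f z * g z) x = pd i f x * g x + f x * pd i g x := by
  unfold pd; rw [fderiv_fun_mul hf hg]; simp; ring

lemma pd_const (x : Fin 4 → ℝ) (i : Fin 4) (c : ℝ) : pd i (fun _ => c) x = 0 := by
  unfold pd; rw [fderiv_fun_const]; simp

lemma pd_coord (x : Fin 4 → ℝ) (i j : Fin 4) :
    pd i (fun z => z j) x = (Pi.single i (1:ℝ) : Fin 4 → ℝ) j := by
  unfold pd; rw [(hasFDerivAt_apply j x).fderiv]; simp

lemma pd_inv2 {x : Fin 4 → ℝ} (h : x 2 ≠ 0) (i : Fin 4) :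
    pd i (fun z : Fin 4 → ℝ => (z 2)⁻¹) x = -((Pi.single i (1:ℝ) : Fin 4 → ℝ) 2) / x 2 ^ 2 := by
  unfold pd
  have hc : (fun z : Fin 4 → ℝ => (z 2)⁻¹) = Inv.inv ∘ (fun z : Fin 4 → ℝ => z 2) := rfl
  rw [hc, fderiv_comp x (differentiableAt_inv h) ((hasFDerivAt_apply 2 x).differentiableAt),
    fderiv_inv, (hasFDerivAt_apply 2 x).fderiv]
  simp [div_eq_mul_inv]

lemma clm_expand (L : (Fin 4 → ℝ) →L[ℝ] ℝ) (v : Fin 4 → ℝ) :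
    L v = v 0 * L (Pi.single 0 1) + v 1 * L (Pi.single 1 1) + v 2 * L (Pi.single 2 1)
      + v 3 * L (Pi.single 3 1) := by
  have hv : v = ∑ i : Fin 4, v i • (Pi.single i 1 : Fin 4 → ℝ) := by
    funext j
    simp [Pi.single_apply, Finset.sum_apply]
  conv_lhs => rw [hv]
  rw [map_sum, Fin.sum_univ_four]
  simp

open ContinuousLinearMap in
set_option maxHeartbeats 2000000 in
lemma chainPd {x : Fin 4 → ℝ} (hx : x 2 ≠ 0)
    {Φ : (Fin 4 → ℝ) → (Fin 4 → ℝ)}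
    (hΦ : Φ = fun x => ![x 0 * x 2, x 1 / (x 2) ^ 2, -1 / (2 * (x 2) ^ 2), x 3])
    {f : (Fin 4 → ℝ) → ℝ} (hf : DifferentiableAt ℝ f (Φ x)) :
    pd 0 (f ∘ Φ) x = x 2 * pd 0 f (Φ x) ∧
    pd 1 (f ∘ Φ) x = (x 2 ^ 2)⁻¹ * pd 1 f (Φ x) ∧
    pd 2 (f ∘ Φ) x = x 0 * pd 0 f (Φ x) + (-2 * x 1 * (x 2 ^ 3)⁻¹) * pd 1 f (Φ x)
        + (x 2 ^ 3)⁻¹ * pd 2 f (Φ x) ∧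
    pd 3 (f ∘ Φ) x = pd 3 f (Φ x) := by
  set L : (Fin 4 → ℝ) →L[ℝ] (Fin 4 → ℝ) := ContinuousLinearMap.pi
    ![x 2 • (proj 0 : (Fin 4 → ℝ) →L[ℝ] ℝ) + x 0 • (proj 2 : (Fin 4 → ℝ) →L[ℝ] ℝ),
      (x 2 ^ 2)⁻¹ • (proj 1 : (Fin 4 → ℝ) →L[ℝ] ℝ)
        + (-2 * x 1 * (x 2 ^ 3)⁻¹) • (proj 2 : (Fin 4 → ℝ) →L[ℝ] ℝ),
      (x 2 ^ 3)⁻¹ • (proj 2 : (Fin 4 → ℝ) →L[ℝ] ℝ),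
      (proj 3 : (Fin 4 → ℝ) →L[ℝ] ℝ)] with hL
  have hLval : ∀ i j : Fin 4, L (Pi.single i 1) j
      = (![![x 2, 0, 0, 0], ![0, (x 2 ^ 2)⁻¹, 0, 0],
          ![x 0, -2 * x 1 * (x 2 ^ 3)⁻¹, (x 2 ^ 3)⁻¹, 0], ![0, 0, 0, 1]] :
          Fin 4 → Fin 4 → ℝ) i j := by
    intro i j
    rw [hL]
    fin_cases i <;> fin_cases j <;>
      simp [ContinuousLinearMap.pi_apply, Pi.single_apply,
        Matrix.cons_val_zero, Matrix.cons_val_one, Matrix.cons_val_two,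
        Matrix.cons_val_three, Matrix.head_cons, Matrix.tail_cons]
  have HΦ : HasFDerivAt Φ L x := by
    have hrw : Φ = fun (x : Fin 4 → ℝ) (i : Fin 4) =>
        (![fun x : Fin 4 → ℝ => x 0 * x 2, fun x : Fin 4 → ℝ => x 1 / (x 2) ^ 2,
           fun x : Fin 4 → ℝ => -1 / (2 * (x 2) ^ 2), fun x : Fin 4 → ℝ => x 3] :
           Fin 4 → (Fin 4 → ℝ) → ℝ) i x := by
      rw [hΦ]; funext x i; fin_cases i <;> rfl
    rw [hrw, hL]
    apply hasFDerivAt_pi.2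
    intro i
    fin_cases i
    · show HasFDerivAt (fun x : Fin 4 → ℝ => x 0 * x 2)
        (x 2 • (proj 0 : (Fin 4 → ℝ) →L[ℝ] ℝ) + x 0 • (proj 2 : (Fin 4 → ℝ) →L[ℝ] ℝ)) x
      have h := (hasFDerivAt_apply (𝕜 := ℝ) 0 x).mul (hasFDerivAt_apply (𝕜 := ℝ) 2 x)
      refine h.congr_fderiv ?_
      ext v
      simp only [ContinuousLinearMap.add_apply, ContinuousLinearMap.smul_apply,
        ContinuousLinearMap.proj_apply, smul_eq_mul]
      ring
    · show HasFDerivAt (fun x : Fin 4 → ℝ => x 1 / x 2 ^ 2)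
        ((x 2 ^ 2)⁻¹ • (proj 1 : (Fin 4 → ℝ) →L[ℝ] ℝ)
          + (-2 * x 1 * (x 2 ^ 3)⁻¹) • (proj 2 : (Fin 4 → ℝ) →L[ℝ] ℝ)) x
      have hfun : (fun x : Fin 4 → ℝ => x 1 / x 2 ^ 2)
          = fun y : Fin 4 → ℝ => y 1 * ((y 2)⁻¹ * (y 2)⁻¹) := by
        funext y; rw [pow_two, div_eq_mul_inv, mul_inv]
      rw [hfun]
      have hi := (hasFDerivAt_inv hx).comp x (hasFDerivAt_apply (𝕜 := ℝ) 2 x)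
      have h := (hasFDerivAt_apply (𝕜 := ℝ) 1 x).mul (hi.mul hi)
      refine h.congr_fderiv ?_
      ext v
      simp only [ContinuousLinearMap.add_apply, ContinuousLinearMap.smul_apply,
        ContinuousLinearMap.coe_comp', Function.comp_apply, ContinuousLinearMap.smulRight_apply,
        ContinuousLinearMap.one_apply, ContinuousLinearMap.proj_apply,
        ContinuousLinearMap.zero_apply, smul_eq_mul, ContinuousLinearMap.toSpanSingleton_apply, Pi.mul_apply]
      field_simp
      ring
    · show HasFDerivAt (fun x : Fin 4 → ℝ => -1 / (2 * x 2 ^ 2))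
        ((x 2 ^ 3)⁻¹ • (proj 2 : (Fin 4 → ℝ) →L[ℝ] ℝ)) x
      have hfun : (fun x : Fin 4 → ℝ => -1 / (2 * x 2 ^ 2))
          = fun y : Fin 4 → ℝ => (-1/2 : ℝ) * ((y 2)⁻¹ * (y 2)⁻¹) := by
        funext y
        rcases eq_or_ne (y 2) 0 with h | h
        · simp [h]
        · field_simp
      rw [hfun]
      have hi := (hasFDerivAt_inv hx).comp x (hasFDerivAt_apply (𝕜 := ℝ) 2 x)
      have h := (hasFDerivAt_const (-1/2 : ℝ) x).mul (hi.mul hi)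
      refine h.congr_fderiv ?_
      ext v
      simp only [ContinuousLinearMap.add_apply, ContinuousLinearMap.smul_apply,
        ContinuousLinearMap.coe_comp', Function.comp_apply, ContinuousLinearMap.smulRight_apply,
        ContinuousLinearMap.one_apply, ContinuousLinearMap.proj_apply,
        ContinuousLinearMap.zero_apply, smul_eq_mul, ContinuousLinearMap.toSpanSingleton_apply, Pi.mul_apply]
      field_simp
      ring
    · show HasFDerivAt (fun x : Fin 4 → ℝ => x 3) ((proj 3 : (Fin 4 → ℝ) →L[ℝ] ℝ)) x
      exact hasFDerivAt_apply (𝕜 := ℝ) 3 x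
  have hcomp : fderiv ℝ (f ∘ Φ) x = (fderiv ℝ f (Φ x)).comp L := by
    rw [fderiv_comp x hf HΦ.differentiableAt, HΦ.fderiv]
  have key : ∀ i : Fin 4, pd i (f ∘ Φ) x
      = (L (Pi.single i 1)) 0 * pd 0 f (Φ x) + (L (Pi.single i 1)) 1 * pd 1 f (Φ x)
        + (L (Pi.single i 1)) 2 * pd 2 f (Φ x) + (L (Pi.single i 1)) 3 * pd 3 f (Φ x) := by
    intro i
    show fderiv ℝ (f ∘ Φ) x (Pi.single i 1) = _
    rw [hcomp]
    exact clm_expand (fderiv ℝ f (Φ x)) (L (Pi.single i 1))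
  refine ⟨?_, ?_, ?_, ?_⟩
  · rw [key 0, hLval 0 0, hLval 0 1, hLval 0 2, hLval 0 3]
    norm_num [Matrix.cons_val_two, Matrix.cons_val_three]
  · rw [key 1, hLval 1 0, hLval 1 1, hLval 1 2, hLval 1 3]
    norm_num [Matrix.cons_val_two, Matrix.cons_val_three]
  · rw [key 2, hLval 2 0, hLval 2 1, hLval 2 2, hLval 2 3]
    norm_num [Matrix.cons_val_two, Matrix.cons_val_three]
  · rw [key 3, hLval 3 0, hLval 3 1, hLval 3 2, hLval 3 3]
    norm_num [Matrix.cons_val_two, Matrix.cons_val_three]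

lemma firstOrder (U' : Set (Fin 4 → ℝ)) (hU' : IsOpen U')
    (hU'pos : ∀ x ∈ U', x 2 > 0)
    (u : (Fin 4 → ℝ) → ℝ) (hu : ContDiffOn ℝ ∞ u U')
    {Φ : (Fin 4 → ℝ) → (Fin 4 → ℝ)}
    (hΦ : Φ = fun x => ![x 0 * x 2, x 1 / (x 2) ^ 2, -1 / (2 * (x 2) ^ 2), x 3])
    (V : Set (Fin 4 → ℝ)) (hV : IsOpen V) (hΦV : Φ '' U' ⊆ V)
    (W : (Fin 4 → ℝ) → ℝ) (hW : ContDiffOn ℝ ∞ W V)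
    (hWu : ∀ x ∈ U', W (Φ x) = x 2 * u x + x 0 * (x 1) ^ 2 / (2 * x 2)) :
    ∀ z ∈ U',
      pd 0 W (Φ z) = pd 0 u z + (1/2) * (z 1 * z 1) * ((z 2)⁻¹ * (z 2)⁻¹) ∧
      pd 1 W (Φ z) = z 2 * z 2 * z 2 * pd 1 u z + z 0 * z 1 * z 2 ∧
      pd 2 W (Φ z) = z 2 * z 2 * z 2 * u z + z 2 * z 2 * z 2 * z 2 * pd 2 u z
          - z 0 * (z 2 * z 2 * z 2) * pd 0 u z + 2 * z 1 * (z 2 * z 2 * z 2) * pd 1 u z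
          + z 0 * z 1 * z 1 * z 2 ∧
      pd 3 W (Φ z) = z 2 * pd 3 u z := by
  intro z hz
  have hz2 : z 2 ≠ 0 := (hU'pos z hz).ne'
  have hCu : ContDiffAt ℝ ∞ u z := hu.contDiffAt (hU'.mem_nhds hz)
  have hDu : DifferentiableAt ℝ u z := hCu.differentiableAt (by norm_num)
  have hWdiff : DifferentiableAt ℝ W (Φ z) :=
    (hW.contDiffAt (hV.mem_nhds (hΦV ⟨z, hz, rfl⟩))).differentiableAt (by norm_num)
  have hGe : (W ∘ Φ) =ᶠ[nhds z]
      fun y => y 2 * u y + (1/2 : ℝ) * (y 0 * (y 1 * y 1)) * (y 2)⁻¹ := by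
    refine Filter.eventuallyEq_of_mem (hU'.mem_nhds hz) fun y hy => ?_
    show W (Φ y) = _
    rw [hWu y hy]; ring
  obtain ⟨e0, e1, e2, e3⟩ := chainPd hz2 hΦ hWdiff
  rw [pd_congr hGe 0] at e0
  rw [pd_congr hGe 1] at e1
  rw [pd_congr hGe 2] at e2
  rw [pd_congr hGe 3] at e3
  simp (disch := first | assumption | (fun_prop (disch := assumption))) only
    [pd_add, pd_sub, pd_mul, pd_inv2, pd_coord, pd_const, Pi.single_apply] at e0 e1 e2 e3
  simp at e0 e1 e2 e3
  have P0 : pd 0 W (Φ z) = pd 0 u z + (1/2) * (z 1 * z 1) * ((z 2)⁻¹ * (z 2)⁻¹) := by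
    field_simp at e0 ⊢
    linear_combination -e0
  have P1 : pd 1 W (Φ z) = z 2 * z 2 * z 2 * pd 1 u z + z 0 * z 1 * z 2 := by
    field_simp at e1
    refine mul_left_cancel₀ (show (2:ℝ) * z 2 ≠ 0 from mul_ne_zero two_ne_zero hz2) ?_
    linear_combination -(z 2) * e1
  have P3 : pd 3 W (Φ z) = z 2 * pd 3 u z := by
    linear_combination -e3
  have P2 : pd 2 W (Φ z) = z 2 * z 2 * z 2 * u z + z 2 * z 2 * z 2 * z 2 * pd 2 u z
      - z 0 * (z 2 * z 2 * z 2) * pd 0 u z + 2 * z 1 * (z 2 * z 2 * z 2) * pd 1 u z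
      + z 0 * z 1 * z 1 * z 2 := by
    rw [P0, P1] at e2
    field_simp at e2
    refine mul_left_cancel₀
      (show (4:ℝ) * z 2 ^ 7 ≠ 0 from mul_ne_zero (by norm_num) (pow_ne_zero _ hz2)) ?_
    linear_combination (-2 * z 2 ^ 7) * e2
  exact ⟨P0, P1, P2, P3⟩

/-- the point transformation
`Φ(x) = (x₁x₃, x₂/x₃², −1/(2x₃²), x₄)`, `W∘Φ = x₃·u + x₁x₂²/(2x₃)`, maps solutions of the
second-heavenly-type equation with `f = x₃` to solutions of the second heavenly equation. -/
theorem statement13 (U' : Set (Fin 4 → ℝ)) (hU' : IsOpen U')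
    (hU'pos : ∀ x ∈ U', x 2 > 0)
    (u : (Fin 4 → ℝ) → ℝ) (hu : ContDiffOn ℝ ∞ u U')
    (hsol : ∀ x ∈ U',
      pd2 0 2 u x + pd2 1 3 u x
        + x 2 * (pd2 0 0 u x * pd2 1 1 u x - (pd2 0 1 u x) ^ 2) = 0)
    (Φ : (Fin 4 → ℝ) → (Fin 4 → ℝ))
    (hΦ : Φ = fun x => ![x 0 * x 2, x 1 / (x 2) ^ 2, -1 / (2 * (x 2) ^ 2), x 3])
    (V : Set (Fin 4 → ℝ)) (hV : IsOpen V) (hΦV : Φ '' U' ⊆ V)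
    (W : (Fin 4 → ℝ) → ℝ) (hW : ContDiffOn ℝ ∞ W V)
    (hWu : ∀ x ∈ U', W (Φ x) = x 2 * u x + x 0 * (x 1) ^ 2 / (2 * x 2)) :
    ∀ x ∈ U',
      pd2 0 2 W (Φ x) + pd2 1 3 W (Φ x)
        + pd2 0 0 W (Φ x) * pd2 1 1 W (Φ x) - (pd2 0 1 W (Φ x)) ^ 2 = 0 := by
  intro x hx
  have hx2 : x 2 ≠ 0 := (hU'pos x hx).ne'
  have hCu : ContDiffAt ℝ ∞ u x := hu.contDiffAt (hU'.mem_nhds hx)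
  have hDu : DifferentiableAt ℝ u x := hCu.differentiableAt (by norm_num)
  have hD0 : DifferentiableAt ℝ (pd 0 u) x :=
    ((hCu.fderiv_right (m := ∞) le_rfl).clm_apply contDiffAt_const).differentiableAt (by norm_num)
  have hD1 : DifferentiableAt ℝ (pd 1 u) x :=
    ((hCu.fderiv_right (m := ∞) le_rfl).clm_apply contDiffAt_const).differentiableAt (by norm_num)
  have hD2 : DifferentiableAt ℝ (pd 2 u) x :=
    ((hCu.fderiv_right (m := ∞) le_rfl).clm_apply contDiffAt_const).differentiableAt (by norm_num)
  have hD3 : DifferentiableAt ℝ (pd 3 u) x :=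
    ((hCu.fderiv_right (m := ∞) le_rfl).clm_apply contDiffAt_const).differentiableAt (by norm_num)
  have hCW : ContDiffAt ℝ ∞ W (Φ x) := hW.contDiffAt (hV.mem_nhds (hΦV ⟨x, hx, rfl⟩))
  have hf : ∀ j : Fin 4, DifferentiableAt ℝ (pd j W) (Φ x) := fun j =>
    ((hCW.fderiv_right (m := ∞) le_rfl).clm_apply contDiffAt_const).differentiableAt (by norm_num)
  have hFO := firstOrder U' hU' hU'pos u hu hΦ V hV hΦV W hW hWu
  have hA0 : ((pd 0 W) ∘ Φ) =ᶠ[nhds x]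
      fun z => pd 0 u z + (1/2 : ℝ) * (z 1 * z 1) * ((z 2)⁻¹ * (z 2)⁻¹) :=
    Filter.eventuallyEq_of_mem (hU'.mem_nhds hx) fun y hy => (hFO y hy).1
  have hA1 : ((pd 1 W) ∘ Φ) =ᶠ[nhds x]
      fun z => z 2 * z 2 * z 2 * pd 1 u z + z 0 * z 1 * z 2 :=
    Filter.eventuallyEq_of_mem (hU'.mem_nhds hx) fun y hy => (hFO y hy).2.1
  have hA2 : ((pd 2 W) ∘ Φ) =ᶠ[nhds x]
      fun z => z 2 * z 2 * z 2 * u z + z 2 * z 2 * z 2 * z 2 * pd 2 u z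
          - z 0 * (z 2 * z 2 * z 2) * pd 0 u z + 2 * z 1 * (z 2 * z 2 * z 2) * pd 1 u z
          + z 0 * z 1 * z 1 * z 2 :=
    Filter.eventuallyEq_of_mem (hU'.mem_nhds hx) fun y hy => (hFO y hy).2.2.1
  have hA3 : ((pd 3 W) ∘ Φ) =ᶠ[nhds x] fun z => z 2 * pd 3 u z :=
    Filter.eventuallyEq_of_mem (hU'.mem_nhds hx) fun y hy => (hFO y hy).2.2.2
  have c00 := (chainPd hx2 hΦ (hf 0)).1
  rw [pd_congr hA0 0] at c00
  have c01 := (chainPd hx2 hΦ (hf 1)).1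
  rw [pd_congr hA1 0] at c01
  have c11 := (chainPd hx2 hΦ (hf 1)).2.1
  rw [pd_congr hA1 1] at c11
  have c02 := (chainPd hx2 hΦ (hf 2)).1
  rw [pd_congr hA2 0] at c02
  have c13 := (chainPd hx2 hΦ (hf 3)).2.1
  rw [pd_congr hA3 1] at c13
  simp (disch := first | assumption | (fun_prop (disch := assumption))) only
    [pd_add, pd_sub, pd_mul, pd_inv2, pd_coord, pd_const, Pi.single_apply] at c00 c01 c11 c02 c13
  simp at c00 c01 c11 c02 c13
  have hs := hsol x hx
  simp only [pd2] at hs ⊢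
  have q00 : x 2 * pd 0 (pd 0 W) (Φ x) = pd 0 (pd 0 u) x := by
    linear_combination -c00
  have q01 : pd 0 (pd 1 W) (Φ x) = x 2 ^ 2 * pd 0 (pd 1 u) x + x 1 := by
    refine mul_left_cancel₀ hx2 ?_
    linear_combination -c01
  have q11 : pd 1 (pd 1 W) (Φ x) = x 2 ^ 5 * pd 1 (pd 1 u) x + x 0 * x 2 ^ 3 := by
    field_simp at c11
    linear_combination -c11
  have q02 : pd 0 (pd 2 W) (Φ x) = x 2 ^ 3 * pd 0 (pd 2 u) x - x 0 * x 2 ^ 2 * pd 0 (pd 0 u) x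
      + 2 * x 1 * x 2 ^ 2 * pd 0 (pd 1 u) x + x 1 ^ 2 := by
    refine mul_left_cancel₀ hx2 ?_
    linear_combination -c02
  have q13 : pd 1 (pd 3 W) (Φ x) = x 2 ^ 3 * pd 1 (pd 3 u) x := by
    field_simp at c13
    linear_combination -c13
  rw [q02, q13, q11, q01]
  linear_combination (x 2 ^ 4 * pd 1 (pd 1 u) x + x 0 * x 2 ^ 2) * q00 + x 2 ^ 3 * hs
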